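/- On any active ε-greedy trajectory for which event E holds, for every T ≥ 1 the empirically optimal policy satisfies L(π_{T+1}) − L(π*) ≤ Δ*_{T+1}(π_{T+1}); in particular L(π_{T+1}) − L(π*) ≤ Δ_{T+1}. -/

import Mathlib

open MeasureTheory Finset

namespace CB

/-- Data of an active ε-greedy trajectory: contexts, loss vectors, chosen actions,
empirical minimizers, constrained empirical minimizers, explored action sets and
sampling probabilities. -/
structure TrajData (K : ℕ) (X : Type*) where
  x : ℕ → X
  loss : ℕ → Fin K → ℝ
  act : ℕ → Fin K
  pit : ℕ → X → Fin K
  pita : ℕ → Fin K → X → Fin K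
  Aset : ℕ → Finset (Fin K)
  p : ℕ → Fin K → ℝ

variable {K : ℕ} {X : Type*}

/-- IPS loss estimate `ℓ̂_t(b)` with value 1 on unexplored actions. -/
noncomputable def TrajData.lhat (τ : TrajData K X) (t : ℕ) (b : Fin K) : ℝ :=
  if b ∈ τ.Aset t then (if b = τ.act t then τ.loss t (τ.act t) / τ.p t (τ.act t) else 0) else 1

/-- Biased loss `ℓ̃_t(b)` with value 1 on unexplored actions. -/
noncomputable def TrajData.ltilde (τ : TrajData K X) (t : ℕ) (b : Fin K) : ℝ :=
  if b ∈ τ.Aset t then τ.loss t b else 1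

/-- `L̂_T(π)`. -/
noncomputable def TrajData.Lhat (τ : TrajData K X) (T : ℕ) (π : X → Fin K) : ℝ :=
  (1 / (T : ℝ)) * ∑ t ∈ Finset.Icc 1 T, τ.lhat t (π (τ.x t))

/-- `L̃_T(π)`. -/
noncomputable def TrajData.Ltilde (τ : TrajData K X) (T : ℕ) (π : X → Fin K) : ℝ :=
  (1 / (T : ℝ)) * ∑ t ∈ Finset.Icc 1 T, τ.ltilde t (π (τ.x t))

/-- `L_T(π)`, the empirical loss on the true (unobserved) loss vectors. -/
noncomputable def TrajData.Lemp (τ : TrajData K X) (T : ℕ) (π : X → Fin K) : ℝ :=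
  (1 / (T : ℝ)) * ∑ t ∈ Finset.Icc 1 T, τ.loss t (π (τ.x t))

/-- `e_T = log(2|Π|(T²+T)/δ)/T`. -/
noncomputable def eBound (N : ℕ) (δ : ℝ) (T : ℕ) : ℝ :=
  Real.log (2 * N * ((T : ℝ) ^ 2 + T) / δ) / T

/-- `Δ_T = (√(2K/ε)+1)·√(e_{T−1}) + (K/ε+3)·e_{T−1}`. -/
noncomputable def Δbound (K : ℕ) (ε δ : ℝ) (N : ℕ) (T : ℕ) : ℝ :=
  (Real.sqrt (2 * K / ε) + 1) * Real.sqrt (eBound N δ (T - 1))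
    + ((K : ℝ) / ε + 3) * eBound N δ (T - 1)

/-- `Δ*_T(π)` expressed through `r = ρ(π,π*)`. -/
noncomputable def Δstar (K : ℕ) (ε δ : ℝ) (N : ℕ) (r : ℝ) (T : ℕ) : ℝ :=
  (Real.sqrt (2 * K / ε) + 1) * Real.sqrt (r * eBound N δ (T - 1))
    + ((K : ℝ) / ε + 3) * eBound N δ (T - 1)

/-- Population (expected) loss `L(π)`. -/
noncomputable def popLoss [MeasurableSpace X] (D : Measure (X × (Fin K → ℝ)))
    (π : X → Fin K) : ℝ :=
  ∫ z, z.2 (π z.1) ∂D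

/-- Expected disagreement `ρ(π,π') = P_x(π(x) ≠ π'(x))`. -/
noncomputable def disag [MeasurableSpace X] (D : Measure (X × (Fin K → ℝ)))
    (π π' : X → Fin K) : ℝ :=
  (D.map Prod.fst {x | π x ≠ π' x}).toReal

/-- The defining properties of an active ε-greedy trajectory. -/
def TrajData.IsValid (τ : TrajData K X) (P : Finset (X → Fin K)) (ε δ : ℝ) : Prop :=
  (∀ t b, τ.loss t b ∈ Set.Icc (0 : ℝ) 1) ∧
  (∀ t, 1 ≤ t → τ.pit t ∈ P ∧ ∀ π ∈ P, τ.Lhat (t - 1) (τ.pit t) ≤ τ.Lhat (t - 1) π) ∧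
  (∀ t, 1 ≤ t → ∀ b : Fin K, τ.pita t b ∈ P ∧ τ.pita t b (τ.x t) = b ∧
      ∀ π ∈ P, π (τ.x t) = b → τ.Lhat (t - 1) (τ.pita t b) ≤ τ.Lhat (t - 1) π) ∧
  (τ.Aset 1 = Finset.univ) ∧
  (∀ t, 2 ≤ t → ∀ b : Fin K, b ∈ τ.Aset t ↔
      τ.Lhat (t - 1) (τ.pita t b) - τ.Lhat (t - 1) (τ.pit t) ≤ Δbound K ε δ P.card t) ∧
  (∀ t, 1 ≤ t →
      τ.p t (τ.pit t (τ.x t)) = 1 - (((τ.Aset t).card : ℝ) - 1) * ε / K ∧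
      (∀ b ∈ τ.Aset t, b ≠ τ.pit t (τ.x t) → τ.p t b = ε / K) ∧
      (∀ b, b ∉ τ.Aset t → τ.p t b = 0)) ∧
  (∀ t, 1 ≤ t → 0 < τ.p t (τ.act t))

/-- Event `E`: the two deviation bounds hold simultaneously for all policies and horizons. -/
def TrajData.EventE [MeasurableSpace X] (τ : TrajData K X) (P : Finset (X → Fin K))
    (D : Measure (X × (Fin K → ℝ))) (pistar : X → Fin K) (ε δ : ℝ) : Prop :=
  ∀ π ∈ P, ∀ T : ℕ, 1 ≤ T →
    |(τ.Lhat T π - τ.Lhat T pistar) - (τ.Ltilde T π - τ.Ltilde T pistar)| ≤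
        Real.sqrt (2 * K * disag D π pistar * eBound P.card δ T / ε)
          + ((K : ℝ) / ε + 1) * eBound P.card δ T ∧
    |(τ.Lemp T π - τ.Lemp T pistar) - (popLoss D π - popLoss D pistar)| ≤
        Real.sqrt (disag D π pistar * eBound P.card δ T) + 2 * eBound P.card δ T


/-- On any active ε-greedy trajectory for which event `E` holds, for every `T ≥ 1` the
empirically optimal policy satisfies `L(π_{T+1}) − L(π*) ≤ Δ*_{T+1}(π_{T+1})`;
in particular `L(π_{T+1}) − L(π*) ≤ Δ_{T+1}`. -/
theorem correctness_of_empirical_minimizer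
    {X : Type*} [MeasurableSpace X] {K : ℕ} (hK : 2 ≤ K)
    (P : Finset (X → Fin K)) (hPne : P.Nonempty)
    (hPmeas : ∀ π ∈ P, Measurable π)
    (D : Measure (X × (Fin K → ℝ))) [IsProbabilityMeasure D]
    (hD : ∀ᵐ z ∂D, ∀ b : Fin K, z.2 b ∈ Set.Icc (0 : ℝ) 1)
    {ε δ : ℝ} (hε : ε ∈ Set.Ioc (0 : ℝ) 1) (hδ : δ ∈ Set.Ioo (0 : ℝ) 1)
    (pistar : X → Fin K) (hstar : pistar ∈ P)
    (hstar_opt : ∀ π ∈ P, popLoss D pistar ≤ popLoss D π)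
    (tr : TrajData K X) (htr : tr.IsValid P ε δ)
    (hE : tr.EventE P D pistar ε δ) :
    ∀ T : ℕ, 1 ≤ T →
      popLoss D (tr.pit (T + 1)) - popLoss D pistar ≤
        Δstar K ε δ P.card (disag D (tr.pit (T + 1)) pistar) (T + 1) ∧
      popLoss D (tr.pit (T + 1)) - popLoss D pistar ≤ Δbound K ε δ P.card (T + 1) := by
  obtain ⟨hloss, hpit, hpita, hA1, hAset, hp, hpos⟩ := htr
  obtain ⟨hε0, hε1⟩ := hε
  have hN1 : (1:ℝ) ≤ (P.card : ℝ) := by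
    exact_mod_cast Nat.one_le_iff_ne_zero.mpr (Finset.card_ne_zero_of_mem hPne.choose_spec)
  have hKpos : (0:ℝ) < (K:ℝ) := by
    have : 0 < K := by omega
    exact_mod_cast this
  -- basic facts about ρ
  have hrho0 : ∀ π : X → Fin K, 0 ≤ disag D π pistar := fun π => ENNReal.toReal_nonneg
  have hrho1 : ∀ π : X → Fin K, disag D π pistar ≤ 1 := by
    intro π
    have hprob : IsProbabilityMeasure (D.map Prod.fst) :=
      Measure.isProbabilityMeasure_map measurable_fst.aemeasurable
    have hle : (D.map Prod.fst) {x | π x ≠ pistar x} ≤ 1 := prob_le_one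
    have := ENNReal.toReal_mono (by simp) hle
    simpa [disag] using this
  -- e_T ≥ 0
  have heb : ∀ T : ℕ, 1 ≤ T → 0 ≤ eBound P.card δ T := by
    intro T hT
    have hT1 : (1:ℝ) ≤ (T:ℝ) := by exact_mod_cast hT
    unfold eBound
    apply div_nonneg _ (by positivity)
    apply Real.log_nonneg
    rw [le_div_iff₀ hδ.1]
    nlinarith [hδ.2.le, hδ.1.le]
  -- the key deduction from event E, given that π* is never eliminated up to time T
  have key : ∀ T : ℕ, 1 ≤ T → (∀ t, 1 ≤ t → t ≤ T → pistar (tr.x t) ∈ tr.Aset t) →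
      (popLoss D (tr.pit (T+1)) - popLoss D pistar ≤
          Δstar K ε δ P.card (disag D (tr.pit (T+1)) pistar) (T+1) ∧
        popLoss D (tr.pit (T+1)) - popLoss D pistar ≤ Δbound K ε δ P.card (T+1) ∧
        tr.Lhat T pistar - tr.Lhat T (tr.pit (T+1)) ≤ Δbound K ε δ P.card (T+1)) := by
    intro T hT Hin
    have hTsub : T + 1 - 1 = T := by omega
    obtain ⟨hπP, hπmin⟩ := hpit (T+1) (by omega)
    rw [hTsub] at hπmin
    have a1 : tr.Lhat T (tr.pit (T+1)) ≤ tr.Lhat T pistar := hπmin pistar hstar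
    obtain ⟨a2, a3⟩ := hE (tr.pit (T+1)) hπP T hT
    have he0 : 0 ≤ eBound P.card δ T := heb T hT
    have hρ0 := hrho0 (tr.pit (T+1))
    have hρ1 := hrho1 (tr.pit (T+1))
    have hs1 : Real.sqrt (2 * (K:ℝ) * disag D (tr.pit (T+1)) pistar * eBound P.card δ T / ε)
        = Real.sqrt (2 * (K:ℝ) / ε) *
          Real.sqrt (disag D (tr.pit (T+1)) pistar * eBound P.card δ T) := by
      rw [show 2 * (K:ℝ) * disag D (tr.pit (T+1)) pistar * eBound P.card δ T / ε
          = (2 * (K:ℝ) / ε) * (disag D (tr.pit (T+1)) pistar * eBound P.card δ T) from by ring,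
        Real.sqrt_mul (by positivity)]
    have a4 : tr.Lemp T (tr.pit (T+1)) ≤ tr.Ltilde T (tr.pit (T+1)) := by
      unfold TrajData.Lemp TrajData.Ltilde
      apply mul_le_mul_of_nonneg_left _ (by positivity)
      apply Finset.sum_le_sum
      intro t _
      unfold TrajData.ltilde
      split
      · exact le_refl _
      · exact (hloss t _).2
    have a5 : tr.Ltilde T pistar = tr.Lemp T pistar := by
      unfold TrajData.Ltilde TrajData.Lemp
      congr 1
      apply Finset.sum_congr rfl
      intro t ht
      simp only [Finset.mem_Icc] at ht
      unfold TrajData.ltilde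
      rw [if_pos (Hin t ht.1 ht.2)]
    have a6 : popLoss D pistar ≤ popLoss D (tr.pit (T+1)) := hstar_opt _ hπP
    have habs2a := (abs_le.mp a2).1
    have habs2b := (abs_le.mp a2).2
    have habs3a := (abs_le.mp a3).1
    have habs3b := (abs_le.mp a3).2
    rw [hs1] at habs2a habs2b
    have hΔs : Δstar K ε δ P.card (disag D (tr.pit (T+1)) pistar) (T+1) =
        (Real.sqrt (2*(K:ℝ)/ε) + 1) *
            Real.sqrt (disag D (tr.pit (T+1)) pistar * eBound P.card δ T)
          + ((K:ℝ)/ε + 3) * eBound P.card δ T := by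
      unfold Δstar; rw [hTsub]
    have hΔb : Δbound K ε δ P.card (T+1) =
        (Real.sqrt (2*(K:ℝ)/ε) + 1) * Real.sqrt (eBound P.card δ T)
          + ((K:ℝ)/ε + 3) * eBound P.card δ T := by
      unfold Δbound; rw [hTsub]
    have hsle : Real.sqrt (disag D (tr.pit (T+1)) pistar * eBound P.card δ T)
        ≤ Real.sqrt (eBound P.card δ T) := Real.sqrt_le_sqrt (by nlinarith)
    have hcoef : (0:ℝ) ≤ Real.sqrt (2*(K:ℝ)/ε) + 1 := by positivity
    have hmul := mul_le_mul_of_nonneg_left hsle hcoef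
    have hΔsb : Δstar K ε δ P.card (disag D (tr.pit (T+1)) pistar) (T+1)
        ≤ Δbound K ε δ P.card (T+1) := by
      rw [hΔs, hΔb]; linarith
    have hmain : popLoss D (tr.pit (T+1)) - popLoss D pistar ≤
        Δstar K ε δ P.card (disag D (tr.pit (T+1)) pistar) (T+1) := by
      rw [hΔs]; linarith
    refine ⟨hmain, hmain.trans hΔsb, ?_⟩
    rw [hΔb]; linarith
  -- π* is never eliminated
  have hIn : ∀ T : ℕ, 1 ≤ T → ∀ t, 1 ≤ t → t ≤ T → pistar (tr.x t) ∈ tr.Aset t := by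
    intro T hT
    induction T, hT using Nat.le_induction with
    | base =>
      intro t h1 h2
      have ht1 : t = 1 := by omega
      subst ht1
      rw [hA1]; exact Finset.mem_univ _
    | succ T hT ih =>
      intro t h1 h2
      rcases Nat.lt_or_ge t (T+1) with h | h
      · exact ih t h1 (by omega)
      · have ht : t = T + 1 := by omega
        subst ht
        have hTsub : T + 1 - 1 = T := by omega
        obtain ⟨hmem, hval, hmin⟩ := hpita (T+1) (by omega) (pistar (tr.x (T+1)))
        have hmin' := hmin pistar hstar rfl
        rw [hTsub] at hmin'
        have hk := (key T hT ih).2.2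
        apply (hAset (T+1) (by omega) (pistar (tr.x (T+1)))).mpr
        rw [hTsub]
        linarith
  intro T hT
  obtain ⟨h1, h2, _⟩ := key T hT (hIn T hT)
  exact ⟨h1, h2⟩

end CB
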